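/- For every n ≥ 6, every pair of edge-disjoint Hamiltonian paths from 1 to n on {1,...,n}, with edge cost |j−k|, has total cost at least 16(n−1)/5. -/

import Mathlib

/-- A Hamiltonian path on the vertex set `{1,…,n}` from vertex `1` to vertex `n`,
given as the sequence `p 0, p 1, …, p (n-1)` of visited vertices. -/
def IsHamPath (n : ℕ) (p : ℕ → ℕ) : Prop :=
  2 ≤ n ∧ p 0 = 1 ∧ p (n - 1) = n ∧
  (∀ i, i < n → 1 ≤ p i ∧ p i ≤ n) ∧
  (∀ i j, i < n → j < n → p i = p j → i = j)

/-- The depth of the segment between `s` and `s+1` with respect to the path `p`: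
the number of edges `{j,k}` (with `j < k`) of `p` such that `j ≤ s < k`. -/
def segDepth (n : ℕ) (p : ℕ → ℕ) (s : ℕ) : ℕ :=
  ((Finset.range (n - 1)).filter
    (fun i => min (p i) (p (i + 1)) ≤ s ∧ s < max (p i) (p (i + 1)))).card

/-- `{a, b}` is an (unordered) edge of the path `p`. -/
def IsEdgeOf (n : ℕ) (p : ℕ → ℕ) (a b : ℕ) : Prop :=
  ∃ i, i < n - 1 ∧ ((p i = a ∧ p (i + 1) = b) ∨ (p i = b ∧ p (i + 1) = a))

/-- Two paths are edge-disjoint: they share no unordered edge. -/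
def PathsEdgeDisjoint (n : ℕ) (p q : ℕ → ℕ) : Prop :=
  ∀ i, i < n - 1 → ¬ IsEdgeOf n q (p i) (p (i + 1))

/-- The cost of a path, where the edge `{j,k}` costs `|j - k|`. -/
def pathCost (n : ℕ) (p : ℕ → ℕ) : ℕ :=
  ∑ i ∈ Finset.range (n - 1), (max (p i) (p (i + 1)) - min (p i) (p (i + 1)))

/-- The vertex `v` is covered by the path `p`: some edge `{j,k}` of `p` has `j < v < k`. -/
def CoversVertex (n : ℕ) (p : ℕ → ℕ) (v : ℕ) : Prop :=
  ∃ i, i < n - 1 ∧ min (p i) (p (i + 1)) < v ∧ v < max (p i) (p (i + 1))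


lemma ham_surj {n : ℕ} {p : ℕ → ℕ} (hp : IsHamPath n p) (v : ℕ) (hv1 : 1 ≤ v) (hv2 : v ≤ n) :
    ∃ i, i < n ∧ p i = v := by
  obtain ⟨hn, h0, hl, hb, hinj⟩ := hp
  have hcard : (Finset.Icc 1 n).card ≤ (Finset.range n).card := by
    simp [Nat.card_Icc]
  have := Finset.surj_on_of_inj_on_of_card_le (s := Finset.range n) (t := Finset.Icc 1 n)
    (f := fun a _ => p a)
    (fun a ha => by
      simp only [Finset.mem_Icc]
      exact hb a (Finset.mem_range.mp ha))
    (fun a₁ a₂ ha₁ ha₂ h => hinj a₁ a₂ (Finset.mem_range.mp ha₁) (Finset.mem_range.mp ha₂) h)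
    hcard
  obtain ⟨a, ha, hav⟩ := this v (Finset.mem_Icc.mpr ⟨hv1, hv2⟩)
  exact ⟨a, Finset.mem_range.mp ha, hav.symm⟩

-- card of sublevel fibers
lemma card_le_filter {n : ℕ} {p : ℕ → ℕ} (hp : IsHamPath n p) (s : ℕ) (hs : s ≤ n) :
    ((Finset.range n).filter (fun i => p i ≤ s)).card = s := by
  obtain ⟨hn, h0, hl, hb, hinj⟩ := hp
  have : ((Finset.range n).filter (fun i => p i ≤ s)).card = (Finset.Icc 1 s).card := by
    apply Finset.card_bij (fun i _ => p i)
    · intro a ha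
      simp only [Finset.mem_filter, Finset.mem_range] at ha
      exact Finset.mem_Icc.mpr ⟨(hb a ha.1).1, ha.2⟩
    · intro a₁ ha₁ a₂ ha₂ h
      simp only [Finset.mem_filter, Finset.mem_range] at ha₁ ha₂
      exact hinj a₁ a₂ ha₁.1 ha₂.1 h
    · intro v hv
      simp only [Finset.mem_Icc] at hv
      obtain ⟨i, hi, hiv⟩ := ham_surj ⟨hn, h0, hl, hb, hinj⟩ v hv.1 (le_trans hv.2 hs)
      exact ⟨i, Finset.mem_filter.mpr ⟨Finset.mem_range.mpr hi, by omega⟩, hiv⟩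
  rw [this, Nat.card_Icc]
  omega

-- parity
lemma segDepth_odd {n : ℕ} {p : ℕ → ℕ} (hp : IsHamPath n p) (s : ℕ) (hs1 : 1 ≤ s) (hs2 : s < n) :
    Odd (segDepth n p s) := by
  obtain ⟨hn, h0, hl, hb, hinj⟩ := hp
  set f : ℕ → ZMod 2 := fun i => if p i ≤ s then 1 else 0 with hf
  have key : ((segDepth n p s : ℕ) : ZMod 2) = 1 := by
    rw [segDepth, Finset.card_filter]
    push_cast
    have step : ∀ i, ((if min (p i) (p (i + 1)) ≤ s ∧ s < max (p i) (p (i + 1)) then (1:ZMod 2) else 0))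
        = f i + f (i+1) := by
      intro i
      simp only [hf]
      rcases le_or_gt (p i) s with h1 | h1 <;> rcases le_or_gt (p (i+1)) s with h2 | h2
      · rw [if_neg (by omega), if_pos h1, if_pos h2]; decide
      · rw [if_pos (by omega), if_pos h1, if_neg (by omega)]; decide
      · rw [if_pos (by omega), if_neg (by omega), if_pos h2]; decide
      · rw [if_neg (by omega), if_neg (by omega), if_neg (by omega)]; decide
    rw [Finset.sum_congr rfl (fun i _ => step i)]
    have tele : ∀ m, ∑ i ∈ Finset.range m, (f i + f (i+1)) = f 0 + f m := by
      intro m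
      induction m with
      | zero => rw [Finset.sum_range_zero, CharTwo.add_self_eq_zero]
      | succ k ih =>
          rw [Finset.sum_range_succ, ih,
            show f 0 + f k + (f k + f (k+1)) = f 0 + (f k + f k) + f (k+1) by ring,
            CharTwo.add_self_eq_zero, add_zero]
    rw [tele]
    have e0 : f 0 = 1 := by simp only [hf]; rw [h0, if_pos hs1]
    have e1 : f (n-1) = 0 := by simp only [hf]; rw [hl, if_neg (by omega)]
    rw [e0, e1, add_zero]
  rw [Nat.odd_iff]
  rcases Nat.even_or_odd (segDepth n p s) with he | ho
  · exfalso
    obtain ⟨m, hm⟩ := he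
    rw [hm] at key
    push_cast at key
    rw [show ((m:ZMod 2) + m) = 2 * m by ring] at key
    simp [show (2 : ZMod 2) = 0 by decide] at key
  · exact Nat.odd_iff.mp ho

lemma depth_one_classify {n : ℕ} {p : ℕ → ℕ} (hp : IsHamPath n p) (s : ℕ)
    (hs1 : 1 ≤ s) (hs2 : s < n) (hdep : segDepth n p s = 1) :
    ∀ i, i < n → (p i ≤ s ↔ i < s) := by
  obtain ⟨hn, h0, hl, hb, hinj⟩ := hp
  obtain ⟨c, hc⟩ := Finset.card_eq_one.mp hdep
  have hcmem : c ∈ (Finset.range (n-1)).filter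
      (fun i => min (p i) (p (i + 1)) ≤ s ∧ s < max (p i) (p (i + 1))) := by
    rw [hc]; exact Finset.mem_singleton_self c
  rw [Finset.mem_filter, Finset.mem_range] at hcmem
  have hflip : ∀ i, i < n - 1 → i ≠ c → ((p i ≤ s) ↔ (p (i+1) ≤ s)) := by
    intro i hi hic
    have : i ∉ (Finset.range (n-1)).filter
        (fun i => min (p i) (p (i + 1)) ≤ s ∧ s < max (p i) (p (i + 1))) := by
      rw [hc, Finset.mem_singleton]; exact hic
    rw [Finset.mem_filter, Finset.mem_range] at this
    have h2 : ¬(min (p i) (p (i + 1)) ≤ s ∧ s < max (p i) (p (i + 1))) := by tauto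
    omega
  have up : ∀ i, i ≤ c → p i ≤ s := by
    intro i
    induction i with
    | zero => intro _; rw [h0]; omega
    | succ k ih =>
        intro hk
        have hkc : k ≤ c := by omega
        have := ih hkc
        have hk2 : k ≠ c := by omega
        exact (hflip k (by omega) hk2).mp this
  have down : ∀ m j, j < n → n ≤ j + 1 + m → c < j → ¬ (p j ≤ s) := by
    intro m
    induction m with
    | zero =>
        intro j hj hj2 _
        have : j = n - 1 := by omega
        rw [this, hl]; omega
    | succ m ih =>
        intro j hj hj2 hcj
        by_cases hlast : j = n - 1
        · rw [hlast, hl]; omega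
        · have hj3 : j < n - 1 := by omega
          have := ih (j+1) (by omega) (by omega) (by omega)
          intro hps
          exact this ((hflip j hj3 (by omega)).mp hps)
  have hchar : ∀ i, i < n → (p i ≤ s ↔ i ≤ c) := by
    intro i hi
    constructor
    · intro hps
      by_contra hic
      exact down n i hi (by omega) (by omega) hps
    · exact up i
  have hcs : c + 1 = s := by
    have : (Finset.range n).filter (fun i => p i ≤ s) = Finset.range (c+1) := by
      ext i
      simp only [Finset.mem_filter, Finset.mem_range]
      constructor
      · rintro ⟨hi, hps⟩; have := (hchar i hi).mp hps; omega
      · intro hi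
        have hin : i < n := by omega
        exact ⟨hin, (hchar i hin).mpr (by omega)⟩
    have h2 := card_le_filter ⟨hn, h0, hl, hb, hinj⟩ s (by omega)
    rw [this, Finset.card_range] at h2
    exact h2
  intro i hi
  rw [hchar i hi]
  omega

lemma gap2 {n : ℕ} {p1 p2 : ℕ → ℕ} (h1 : IsHamPath n p1) (h2 : IsHamPath n p2)
    (hd : PathsEdgeDisjoint n p1 p2) (s : ℕ) (hs1 : 1 ≤ s) (hs2 : s + 2 < n)
    (a1 : segDepth n p1 s = 1) (b1 : segDepth n p1 (s+2) = 1)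
    (a2 : segDepth n p2 s = 1) (b2 : segDepth n p2 (s+2) = 1) : False := by
  have c1s := depth_one_classify h1 s hs1 (by omega) a1
  have c1t := depth_one_classify h1 (s+2) (by omega) (by omega) b1
  have c2s := depth_one_classify h2 s hs1 (by omega) a2
  have c2t := depth_one_classify h2 (s+2) (by omega) (by omega) b2
  have f1 : ¬ (p1 s ≤ s) := fun h => by have := (c1s s (by omega)).mp h; omega
  have f2 : p1 s ≤ s + 2 := (c1t s (by omega)).mpr (by omega)
  have f3 : ¬ (p1 (s+1) ≤ s) := fun h => by have := (c1s (s+1) (by omega)).mp h; omega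
  have f4 : p1 (s+1) ≤ s + 2 := (c1t (s+1) (by omega)).mpr (by omega)
  have g1 : ¬ (p2 s ≤ s) := fun h => by have := (c2s s (by omega)).mp h; omega
  have g2 : p2 s ≤ s + 2 := (c2t s (by omega)).mpr (by omega)
  have g3 : ¬ (p2 (s+1) ≤ s) := fun h => by have := (c2s (s+1) (by omega)).mp h; omega
  have g4 : p2 (s+1) ≤ s + 2 := (c2t (s+1) (by omega)).mpr (by omega)
  have ne1 : p1 s ≠ p1 (s+1) := fun h => by
    have := h1.2.2.2.2 s (s+1) (by omega) (by omega) h; omega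
  have ne2 : p2 s ≠ p2 (s+1) := fun h => by
    have := h2.2.2.2.2 s (s+1) (by omega) (by omega) h; omega
  exact hd s (by omega) ⟨s, by omega, by (try simp only [show s+1+1=s+2 from rfl]); omega⟩

lemma gap3 {n : ℕ} {p1 p2 : ℕ → ℕ} (h1 : IsHamPath n p1) (h2 : IsHamPath n p2)
    (hd : PathsEdgeDisjoint n p1 p2) (s : ℕ) (hs1 : 1 ≤ s) (hs2 : s + 3 < n)
    (a1 : segDepth n p1 s = 1) (b1 : segDepth n p1 (s+3) = 1)
    (a2 : segDepth n p2 s = 1) (b2 : segDepth n p2 (s+3) = 1) : False := by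
  have c1s := depth_one_classify h1 s hs1 (by omega) a1
  have c1t := depth_one_classify h1 (s+3) (by omega) (by omega) b1
  have c2s := depth_one_classify h2 s hs1 (by omega) a2
  have c2t := depth_one_classify h2 (s+3) (by omega) (by omega) b2
  have F : ∀ i, s ≤ i → i ≤ s + 2 → (s < p1 i ∧ p1 i ≤ s + 3) ∧ (s < p2 i ∧ p2 i ≤ s + 3) := by
    intro i hi1 hi2
    have w1 : ¬ (p1 i ≤ s) := fun h => by have := (c1s i (by omega)).mp h; omega
    have w2 : p1 i ≤ s + 3 := (c1t i (by omega)).mpr (by omega)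
    have w3 : ¬ (p2 i ≤ s) := fun h => by have := (c2s i (by omega)).mp h; omega
    have w4 : p2 i ≤ s + 3 := (c2t i (by omega)).mpr (by omega)
    omega
  obtain ⟨⟨u1, u2⟩, v1⟩ := F s (by omega) (by omega)
  obtain ⟨⟨u3, u4⟩, v2⟩ := F (s+1) (by omega) (by omega)
  obtain ⟨⟨u5, u6⟩, v3⟩ := F (s+2) (by omega) (by omega)
  have ne1 : p1 s ≠ p1 (s+1) := fun h => by
    have := h1.2.2.2.2 s (s+1) (by omega) (by omega) h; omega
  have ne2 : p1 s ≠ p1 (s+2) := fun h => by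
    have := h1.2.2.2.2 s (s+2) (by omega) (by omega) h; omega
  have ne3 : p1 (s+1) ≠ p1 (s+2) := fun h => by
    have := h1.2.2.2.2 (s+1) (s+2) (by omega) (by omega) h; omega
  have me1 : p2 s ≠ p2 (s+1) := fun h => by
    have := h2.2.2.2.2 s (s+1) (by omega) (by omega) h; omega
  have me2 : p2 s ≠ p2 (s+2) := fun h => by
    have := h2.2.2.2.2 s (s+2) (by omega) (by omega) h; omega
  have me3 : p2 (s+1) ≠ p2 (s+2) := fun h => by
    have := h2.2.2.2.2 (s+1) (s+2) (by omega) (by omega) h; omega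
  have hmid : p2 (s+1) = p1 (s+1) ∨ p2 (s+1) = p1 s ∨ p2 (s+1) = p1 (s+2) := by omega
  rcases hmid with hY | hY | hY
  · have hX : p2 s = p1 s ∨ p2 s = p1 (s+2) := by omega
    rcases hX with hX | hX
    · exact hd s (by omega) ⟨s, by omega, by (try simp only [show s+1+1=s+2 from rfl]); omega⟩
    · exact hd (s+1) (by omega) ⟨s, by omega, by (try simp only [show s+1+1=s+2 from rfl]); omega⟩
  · have hX : p2 s = p1 (s+1) ∨ p2 (s+2) = p1 (s+1) := by omega
    rcases hX with hX | hX
    · exact hd s (by omega) ⟨s, by omega, by (try simp only [show s+1+1=s+2 from rfl]); omega⟩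
    · exact hd s (by omega) ⟨s+1, by omega, by (try simp only [show s+1+1=s+2 from rfl]); omega⟩
  · have hX : p2 s = p1 (s+1) ∨ p2 (s+2) = p1 (s+1) := by omega
    rcases hX with hX | hX
    · exact hd (s+1) (by omega) ⟨s, by omega, by (try simp only [show s+1+1=s+2 from rfl]); omega⟩
    · exact hd (s+1) (by omega) ⟨s+1, by omega, by (try simp only [show s+1+1=s+2 from rfl]); omega⟩

lemma depth_at_one {n : ℕ} {p : ℕ → ℕ} (hp : IsHamPath n p) : segDepth n p 1 = 1 := by
  obtain ⟨hn, h0, hl, hb, hinj⟩ := hp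
  have : ((Finset.range (n - 1)).filter
      (fun i => min (p i) (p (i + 1)) ≤ 1 ∧ 1 < max (p i) (p (i + 1)))) = {0} := by
    ext i
    simp only [Finset.mem_filter, Finset.mem_range, Finset.mem_singleton]
    constructor
    · rintro ⟨hi, hc1, hc2⟩
      have b1 := hb i (by omega)
      have b2 := hb (i+1) (by omega)
      have : p i = 1 ∨ p (i+1) = 1 := by omega
      rcases this with h | h
      · exact hinj i 0 (by omega) (by omega) (by rw [h, h0])
      · exfalso
        have := hinj (i+1) 0 (by omega) (by omega) (by rw [h, h0])
        omega
    · intro hi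
      subst hi
      have b2 := hb 1 (by omega)
      have hne : p 1 ≠ 1 := fun h => by
        have := hinj 1 0 (by omega) (by omega) (by rw [h, h0]); omega
      simp only [zero_add]
      refine ⟨by omega, ?_, ?_⟩ <;> rw [h0] <;> omega
  rw [segDepth, this, Finset.card_singleton]

lemma depth_at_last {n : ℕ} {p : ℕ → ℕ} (hp : IsHamPath n p) : segDepth n p (n-1) = 1 := by
  obtain ⟨hn, h0, hl, hb, hinj⟩ := hp
  have : ((Finset.range (n - 1)).filter
      (fun i => min (p i) (p (i + 1)) ≤ n-1 ∧ n-1 < max (p i) (p (i + 1)))) = {n-2} := by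
    ext i
    simp only [Finset.mem_filter, Finset.mem_range, Finset.mem_singleton]
    constructor
    · rintro ⟨hi, hc1, hc2⟩
      have b1 := hb i (by omega)
      have b2 := hb (i+1) (by omega)
      have : p i = n ∨ p (i+1) = n := by omega
      rcases this with h | h
      · exfalso
        have := hinj i (n-1) (by omega) (by omega) (by rw [h, hl])
        omega
      · have := hinj (i+1) (n-1) (by omega) (by omega) (by rw [h, hl])
        omega
    · intro hi
      subst hi
      have hidx : n - 2 + 1 = n - 1 := by omega
      rw [hidx, hl]
      have b1 := hb (n-2) (by omega)
      have hne : p (n-2) ≠ n := fun h => by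
        have := hinj (n-2) (n-1) (by omega) (by omega) (by rw [h, hl]); omega
      refine ⟨by omega, ?_, ?_⟩ <;> omega
  rw [segDepth, this, Finset.card_singleton]

lemma not_T2 {n : ℕ} {p1 p2 : ℕ → ℕ} (h1 : IsHamPath n p1) (h2 : IsHamPath n p2)
    (hd : PathsEdgeDisjoint n p1 p2) (hn : 4 ≤ n)
    (a1 : segDepth n p1 2 = 1) (a2 : segDepth n p2 2 = 1) : False := by
  have c1 := depth_one_classify h1 2 (by omega) (by omega) a1
  have c2 := depth_one_classify h2 2 (by omega) (by omega) a2
  have e1 : p1 1 = 2 := by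
    have hle := (c1 1 (by omega)).mpr (by omega)
    have b1 := h1.2.2.2.1 1 (by omega)
    have hne : p1 1 ≠ 1 := fun h => by
      have := h1.2.2.2.2 1 0 (by omega) (by omega) (by rw [h, h1.2.1]); omega
    omega
  have e2 : p2 1 = 2 := by
    have hle := (c2 1 (by omega)).mpr (by omega)
    have b1 := h2.2.2.2.1 1 (by omega)
    have hne : p2 1 ≠ 1 := fun h => by
      have := h2.2.2.2.2 1 0 (by omega) (by omega) (by rw [h, h2.2.1]); omega
    omega
  exact hd 0 (by omega) ⟨0, by omega, Or.inl ⟨by rw [h2.2.1, h1.2.1], by rw [e2, e1]⟩⟩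

lemma not_Tlast {n : ℕ} {p1 p2 : ℕ → ℕ} (h1 : IsHamPath n p1) (h2 : IsHamPath n p2)
    (hd : PathsEdgeDisjoint n p1 p2) (hn : 4 ≤ n)
    (a1 : segDepth n p1 (n-2) = 1) (a2 : segDepth n p2 (n-2) = 1) : False := by
  have c1 := depth_one_classify h1 (n-2) (by omega) (by omega) a1
  have c2 := depth_one_classify h2 (n-2) (by omega) (by omega) a2
  have e1 : p1 (n-2) = n-1 := by
    have hgt : ¬ (p1 (n-2) ≤ n-2) := fun h => by
      have := (c1 (n-2) (by omega)).mp h; omega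
    have b1 := h1.2.2.2.1 (n-2) (by omega)
    have hne : p1 (n-2) ≠ n := fun h => by
      have := h1.2.2.2.2 (n-2) (n-1) (by omega) (by omega) (by rw [h, h1.2.2.1]); omega
    omega
  have e2 : p2 (n-2) = n-1 := by
    have hgt : ¬ (p2 (n-2) ≤ n-2) := fun h => by
      have := (c2 (n-2) (by omega)).mp h; omega
    have b1 := h2.2.2.2.1 (n-2) (by omega)
    have hne : p2 (n-2) ≠ n := fun h => by
      have := h2.2.2.2.2 (n-2) (n-1) (by omega) (by omega) (by rw [h, h2.2.2.1]); omega
    omega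
  have hidx : n - 2 + 1 = n - 1 := by omega
  exact hd (n-2) (by omega)
    ⟨n-2, by omega, Or.inl ⟨by rw [e2, e1], by rw [hidx, h2.2.2.1, h1.2.2.1]⟩⟩

lemma pathCost_eq_sum_segDepth {n : ℕ} {p : ℕ → ℕ} (hp : IsHamPath n p) :
    pathCost n p = ∑ s ∈ Finset.Ico 1 n, segDepth n p s := by
  obtain ⟨hn, h0, hl, hb, hinj⟩ := hp
  have key : ∀ i ∈ Finset.range (n-1),
      max (p i) (p (i + 1)) - min (p i) (p (i + 1))
      = ((Finset.Ico 1 n).filter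
          (fun s => min (p i) (p (i + 1)) ≤ s ∧ s < max (p i) (p (i + 1)))).card := by
    intro i hi
    rw [Finset.mem_range] at hi
    have b1 := hb i (by omega)
    have b2 := hb (i+1) (by omega)
    have : ((Finset.Ico 1 n).filter
        (fun s => min (p i) (p (i + 1)) ≤ s ∧ s < max (p i) (p (i + 1))))
        = Finset.Ico (min (p i) (p (i+1))) (max (p i) (p (i+1))) := by
      ext s
      simp only [Finset.mem_filter, Finset.mem_Ico]
      omega
    rw [this, Nat.card_Ico]
  rw [pathCost, Finset.sum_congr rfl key]
  simp only [Finset.card_filter]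
  rw [Finset.sum_comm]
  apply Finset.sum_congr rfl
  intro s _
  rw [segDepth, Finset.card_filter]

def Dfun (n : ℕ) (p1 p2 : ℕ → ℕ) (s : ℕ) : ℕ := segDepth n p1 s + segDepth n p2 s

def Efun (n : ℕ) (p1 p2 : ℕ → ℕ) (k : ℕ) : ℕ :=
  if 4 ≤ k ∧ k ≤ n + 2 then Dfun n p1 p2 (k - 3) else 4

section main
variable {n : ℕ} {p1 p2 : ℕ → ℕ}

lemma D_ge_two (h1 : IsHamPath n p1) (h2 : IsHamPath n p2) (s : ℕ) (hs1 : 1 ≤ s)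
    (hs2 : s < n) : 2 ≤ Dfun n p1 p2 s := by
  obtain ⟨k1, e1⟩ := segDepth_odd h1 s hs1 hs2
  obtain ⟨k2, e2⟩ := segDepth_odd h2 s hs1 hs2
  unfold Dfun; omega

lemma D_ge_four (h1 : IsHamPath n p1) (h2 : IsHamPath n p2) (s : ℕ) (hs1 : 1 ≤ s)
    (hs2 : s < n) (hnot : ¬ (segDepth n p1 s = 1 ∧ segDepth n p2 s = 1)) :
    4 ≤ Dfun n p1 p2 s := by
  obtain ⟨k1, e1⟩ := segDepth_odd h1 s hs1 hs2
  obtain ⟨k2, e2⟩ := segDepth_odd h2 s hs1 hs2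
  rcases not_and_or.mp hnot with h | h <;> (unfold Dfun; omega)

lemma Efun_real (k : ℕ) (hk1 : 4 ≤ k) (hk2 : k ≤ n + 2) :
    Efun n p1 p2 k = Dfun n p1 p2 (k - 3) := by
  unfold Efun; rw [if_pos ⟨hk1, hk2⟩]

lemma Efun_virt (k : ℕ) (hk : k < 4 ∨ n + 2 < k) : Efun n p1 p2 k = 4 := by
  unfold Efun; rw [if_neg (by omega)]

lemma window_core (D : ℕ → ℕ) (P : ℕ → Prop) (a : ℕ)
    (m0 : 2 ≤ D a) (m1 : 2 ≤ D (a+1)) (m2 : 2 ≤ D (a+2)) (m3 : 2 ≤ D (a+3)) (m4 : 2 ≤ D (a+4))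
    (F0 : ¬ P a → 4 ≤ D a) (F1 : ¬ P (a+1) → 4 ≤ D (a+1)) (F2 : ¬ P (a+2) → 4 ≤ D (a+2))
    (F3 : ¬ P (a+3) → 4 ≤ D (a+3)) (F4 : ¬ P (a+4) → 4 ≤ D (a+4))
    (X02 : ¬ (P a ∧ P (a+2))) (X13 : ¬ (P (a+1) ∧ P (a+3))) (X24 : ¬ (P (a+2) ∧ P (a+4)))
    (X03 : ¬ (P a ∧ P (a+3))) (X14 : ¬ (P (a+1) ∧ P (a+4))) :
    16 ≤ D a + D (a+1) + D (a+2) + D (a+3) + D (a+4) := by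
  by_cases t0 : P a <;> by_cases t1 : P (a+1) <;> by_cases t2 : P (a+2) <;>
  by_cases t3 : P (a+3) <;> by_cases t4 : P (a+4) <;>
  first
    | exact (X02 ⟨t0, t2⟩).elim
    | exact (X13 ⟨t1, t3⟩).elim
    | exact (X24 ⟨t2, t4⟩).elim
    | exact (X03 ⟨t0, t3⟩).elim
    | exact (X14 ⟨t1, t4⟩).elim
    | (try have u0 : 4 ≤ D a := F0 t0
       try have u1 : 4 ≤ D (a+1) := F1 t1
       try have u2 : 4 ≤ D (a+2) := F2 t2
       try have u3 : 4 ≤ D (a+3) := F3 t3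
       try have u4 : 4 ≤ D (a+4) := F4 t4
       omega)

lemma window_generic (h1 : IsHamPath n p1) (h2 : IsHamPath n p2)
    (hd : PathsEdgeDisjoint n p1 p2) (w : ℕ) (hw1 : 4 ≤ w) (hw2 : w ≤ n - 2) :
    16 ≤ ∑ j ∈ Finset.range 5, Efun n p1 p2 (w + j) := by
  have hn : 2 ≤ n := h1.1
  obtain ⟨a, rfl⟩ : ∃ a, w = a + 3 := ⟨w - 3, by omega⟩
  have ha1 : 1 ≤ a := by omega
  have ha2 : a + 4 ≤ n - 1 := by omega
  rw [Finset.sum_range_succ, Finset.sum_range_succ, Finset.sum_range_succ,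
    Finset.sum_range_succ, Finset.sum_range_succ, Finset.sum_range_zero]
  rw [Efun_real (a+3+0) (by omega) (by omega), Efun_real (a+3+1) (by omega) (by omega),
    Efun_real (a+3+2) (by omega) (by omega), Efun_real (a+3+3) (by omega) (by omega),
    Efun_real (a+3+4) (by omega) (by omega)]
  rw [show a+3+0-3 = a from by omega, show a+3+1-3 = a+1 from by omega,
    show a+3+2-3 = a+2 from by omega, show a+3+3-3 = a+3 from by omega,
    show a+3+4-3 = a+4 from by omega]
  have key := window_core (Dfun n p1 p2)
    (fun s => segDepth n p1 s = 1 ∧ segDepth n p2 s = 1) a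
    (D_ge_two h1 h2 a (by omega) (by omega))
    (D_ge_two h1 h2 (a+1) (by omega) (by omega))
    (D_ge_two h1 h2 (a+2) (by omega) (by omega))
    (D_ge_two h1 h2 (a+3) (by omega) (by omega))
    (D_ge_two h1 h2 (a+4) (by omega) (by omega))
    (D_ge_four h1 h2 a (by omega) (by omega))
    (D_ge_four h1 h2 (a+1) (by omega) (by omega))
    (D_ge_four h1 h2 (a+2) (by omega) (by omega))
    (D_ge_four h1 h2 (a+3) (by omega) (by omega))
    (D_ge_four h1 h2 (a+4) (by omega) (by omega))
    (by rintro ⟨⟨x1, x2⟩, y1, y2⟩; exact gap2 h1 h2 hd a (by omega) (by omega) x1 y1 x2 y2)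
    (by rintro ⟨⟨x1, x2⟩, y1, y2⟩
        refine gap2 h1 h2 hd (a+1) (by omega) (by omega) x1 ?_ x2 ?_ <;>
          (rw [show a+1+2 = a+3 from by omega]; assumption))
    (by rintro ⟨⟨x1, x2⟩, y1, y2⟩
        refine gap2 h1 h2 hd (a+2) (by omega) (by omega) x1 ?_ x2 ?_ <;>
          (rw [show a+2+2 = a+4 from by omega]; assumption))
    (by rintro ⟨⟨x1, x2⟩, y1, y2⟩; exact gap3 h1 h2 hd a (by omega) (by omega) x1 y1 x2 y2)
    (by rintro ⟨⟨x1, x2⟩, y1, y2⟩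
        refine gap3 h1 h2 hd (a+1) (by omega) (by omega) x1 ?_ x2 ?_ <;>
          (rw [show a+1+3 = a+4 from by omega]; assumption))
  omega

lemma window_left (h1 : IsHamPath n p1) (h2 : IsHamPath n p2)
    (hd : PathsEdgeDisjoint n p1 p2) (hn : 6 ≤ n) (w : ℕ) (hw : w ≤ 3) :
    18 ≤ ∑ j ∈ Finset.range 5, Efun n p1 p2 (w + j) := by
  have m1 : 2 ≤ Dfun n p1 p2 1 := D_ge_two h1 h2 1 (by omega) (by omega)
  have nt2 : ¬ (segDepth n p1 2 = 1 ∧ segDepth n p2 2 = 1) := by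
    rintro ⟨x, y⟩; exact not_T2 h1 h2 hd (by omega) x y
  have nt3 : ¬ (segDepth n p1 3 = 1 ∧ segDepth n p2 3 = 1) := by
    rintro ⟨x, y⟩
    refine gap2 h1 h2 hd 1 (by omega) (by omega) (depth_at_one h1) ?_ (depth_at_one h2) ?_ <;>
      (rw [show 1+2 = 3 from by omega]; assumption)
  have nt4 : ¬ (segDepth n p1 4 = 1 ∧ segDepth n p2 4 = 1) := by
    rintro ⟨x, y⟩
    refine gap3 h1 h2 hd 1 (by omega) (by omega) (depth_at_one h1) ?_ (depth_at_one h2) ?_ <;>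
      (rw [show 1+3 = 4 from by omega]; assumption)
  have u2 : 4 ≤ Dfun n p1 p2 2 := D_ge_four h1 h2 2 (by omega) (by omega) nt2
  have u3 : 4 ≤ Dfun n p1 p2 3 := D_ge_four h1 h2 3 (by omega) (by omega) nt3
  have u4 : 4 ≤ Dfun n p1 p2 4 := D_ge_four h1 h2 4 (by omega) (by omega) nt4
  rw [Finset.sum_range_succ, Finset.sum_range_succ, Finset.sum_range_succ,
    Finset.sum_range_succ, Finset.sum_range_succ, Finset.sum_range_zero]
  interval_cases w
  · rw [Efun_virt (0+0) (by omega), Efun_virt (0+1) (by omega), Efun_virt (0+2) (by omega),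
      Efun_virt (0+3) (by omega), Efun_real (0+4) (by omega) (by omega),
      show 0+4-3 = 1 from by omega]
    omega
  · rw [Efun_virt (1+0) (by omega), Efun_virt (1+1) (by omega), Efun_virt (1+2) (by omega),
      Efun_real (1+3) (by omega) (by omega), Efun_real (1+4) (by omega) (by omega),
      show 1+3-3 = 1 from by omega, show 1+4-3 = 2 from by omega]
    omega
  · rw [Efun_virt (2+0) (by omega), Efun_virt (2+1) (by omega),
      Efun_real (2+2) (by omega) (by omega), Efun_real (2+3) (by omega) (by omega),
      Efun_real (2+4) (by omega) (by omega),
      show 2+2-3 = 1 from by omega, show 2+3-3 = 2 from by omega, show 2+4-3 = 3 from by omega]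
    omega
  · rw [Efun_virt (3+0) (by omega),
      Efun_real (3+1) (by omega) (by omega), Efun_real (3+2) (by omega) (by omega),
      Efun_real (3+3) (by omega) (by omega), Efun_real (3+4) (by omega) (by omega),
      show 3+1-3 = 1 from by omega, show 3+2-3 = 2 from by omega,
      show 3+3-3 = 3 from by omega, show 3+4-3 = 4 from by omega]
    omega

lemma window_right (h1 : IsHamPath n p1) (h2 : IsHamPath n p2)
    (hd : PathsEdgeDisjoint n p1 p2) (hn : 6 ≤ n) (w : ℕ)
    (hw1 : n - 1 ≤ w) (hw2 : w ≤ n + 2) :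
    18 ≤ ∑ j ∈ Finset.range 5, Efun n p1 p2 (w + j) := by
  have mN : 2 ≤ Dfun n p1 p2 (n-1) := D_ge_two h1 h2 (n-1) (by omega) (by omega)
  have ntN1 : ¬ (segDepth n p1 (n-2) = 1 ∧ segDepth n p2 (n-2) = 1) := by
    rintro ⟨x, y⟩; exact not_Tlast h1 h2 hd (by omega) x y
  have ntN2 : ¬ (segDepth n p1 (n-3) = 1 ∧ segDepth n p2 (n-3) = 1) := by
    rintro ⟨x, y⟩
    refine gap2 h1 h2 hd (n-3) (by omega) (by omega) x ?_ y ?_ <;>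
      (rw [show n-3+2 = n-1 from by omega]
       first
         | exact depth_at_last h1
         | exact depth_at_last h2)
  have ntN3 : ¬ (segDepth n p1 (n-4) = 1 ∧ segDepth n p2 (n-4) = 1) := by
    rintro ⟨x, y⟩
    refine gap3 h1 h2 hd (n-4) (by omega) (by omega) x ?_ y ?_ <;>
      (rw [show n-4+3 = n-1 from by omega]
       first
         | exact depth_at_last h1
         | exact depth_at_last h2)
  have u2 : 4 ≤ Dfun n p1 p2 (n-2) := D_ge_four h1 h2 (n-2) (by omega) (by omega) ntN1
  have u3 : 4 ≤ Dfun n p1 p2 (n-3) := D_ge_four h1 h2 (n-3) (by omega) (by omega) ntN2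
  have u4 : 4 ≤ Dfun n p1 p2 (n-4) := D_ge_four h1 h2 (n-4) (by omega) (by omega) ntN3
  rw [Finset.sum_range_succ, Finset.sum_range_succ, Finset.sum_range_succ,
    Finset.sum_range_succ, Finset.sum_range_succ, Finset.sum_range_zero]
  obtain ⟨r, rfl⟩ : ∃ r, w = (n-1) + r := ⟨w - (n-1), by omega⟩
  have hr : r ≤ 3 := by omega
  interval_cases r
  · rw [Efun_real (n-1+0+0) (by omega) (by omega), Efun_real (n-1+0+1) (by omega) (by omega),
      Efun_real (n-1+0+2) (by omega) (by omega), Efun_real (n-1+0+3) (by omega) (by omega),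
      Efun_virt (n-1+0+4) (by omega),
      show n-1+0+0-3 = n-4 from by omega, show n-1+0+1-3 = n-3 from by omega,
      show n-1+0+2-3 = n-2 from by omega, show n-1+0+3-3 = n-1 from by omega]
    omega
  · rw [Efun_real (n-1+1+0) (by omega) (by omega), Efun_real (n-1+1+1) (by omega) (by omega),
      Efun_real (n-1+1+2) (by omega) (by omega), Efun_virt (n-1+1+3) (by omega),
      Efun_virt (n-1+1+4) (by omega),
      show n-1+1+0-3 = n-3 from by omega, show n-1+1+1-3 = n-2 from by omega,
      show n-1+1+2-3 = n-1 from by omega]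
    omega
  · rw [Efun_real (n-1+2+0) (by omega) (by omega), Efun_real (n-1+2+1) (by omega) (by omega),
      Efun_virt (n-1+2+2) (by omega), Efun_virt (n-1+2+3) (by omega),
      Efun_virt (n-1+2+4) (by omega),
      show n-1+2+0-3 = n-2 from by omega, show n-1+2+1-3 = n-1 from by omega]
    omega
  · rw [Efun_real (n-1+3+0) (by omega) (by omega), Efun_virt (n-1+3+1) (by omega),
      Efun_virt (n-1+3+2) (by omega), Efun_virt (n-1+3+3) (by omega),
      Efun_virt (n-1+3+4) (by omega),
      show n-1+3+0-3 = n-1 from by omega]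
    omega

lemma sum_shift (f : ℕ → ℕ) (m c : ℕ) :
    ∑ w ∈ Finset.range c, f (w + m) = ∑ k ∈ Finset.Ico m (m + c), f k := by
  rw [Finset.sum_Ico_eq_sum_range, show m + c - m = c from by omega]
  exact Finset.sum_congr rfl (fun i _ => by rw [Nat.add_comm])

lemma total_bound (h1 : IsHamPath n p1) (h2 : IsHamPath n p2)
    (hd : PathsEdgeDisjoint n p1 p2) (hn : 6 ≤ n) :
    16 * (n - 1) ≤ 5 * (pathCost n p1 + pathCost n p2) := by
  have hA : pathCost n p1 + pathCost n p2 = ∑ s ∈ Finset.Ico 1 n, Dfun n p1 p2 s := by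
    rw [pathCost_eq_sum_segDepth h1, pathCost_eq_sum_segDepth h2, ← Finset.sum_add_distrib]
    exact Finset.sum_congr rfl (fun s _ => rfl)
  set S := ∑ s ∈ Finset.Ico 1 n, Dfun n p1 p2 s with hS
  have hB : ∑ w ∈ Finset.range (n+3), ∑ j ∈ Finset.range 5, Efun n p1 p2 (w+j)
      = 5 * S + 80 := by
    rw [Finset.sum_comm]
    have inner : ∀ j ∈ Finset.range 5,
        ∑ w ∈ Finset.range (n+3), Efun n p1 p2 (w+j) = S + 16 := by
      intro j hj
      rw [Finset.mem_range] at hj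
      rw [sum_shift]
      rw [← Finset.sum_Ico_consecutive _ (show j ≤ n+3 by omega) (show n+3 ≤ j+(n+3) by omega)]
      rw [← Finset.sum_Ico_consecutive _ (show j ≤ 4 by omega) (show 4 ≤ n+3 by omega)]
      have e1 : ∑ k ∈ Finset.Ico j 4, Efun n p1 p2 k = (4 - j) * 4 := by
        rw [Finset.sum_congr rfl (fun k hk => Efun_virt k
          (Or.inl (Finset.mem_Ico.mp hk).2)), Finset.sum_const, Nat.card_Ico, smul_eq_mul]
      have e2 : ∑ k ∈ Finset.Ico (n+3) (j+(n+3)), Efun n p1 p2 k = j * 4 := by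
        rw [Finset.sum_congr rfl (fun k hk => Efun_virt k
          (Or.inr (by have := (Finset.mem_Ico.mp hk).1; omega))),
          Finset.sum_const, Nat.card_Ico, smul_eq_mul]
        omega
      have e3 : ∑ k ∈ Finset.Ico 4 (n+3), Efun n p1 p2 k = S := by
        rw [Finset.sum_Ico_eq_sum_range, show n+3-4 = n-1 from by omega]
        rw [hS, Finset.sum_Ico_eq_sum_range]
        apply Finset.sum_congr rfl
        intro i hi
        rw [Finset.mem_range] at hi
        rw [Efun_real (4+i) (by omega) (by omega), show 4+i-3 = 1+i from by omega]
      rw [e1, e2, e3]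
      omega
    rw [Finset.sum_congr rfl inner, Finset.sum_const, Finset.card_range, smul_eq_mul]
    omega
  have hC : 16*(n+3) + 16 ≤ ∑ w ∈ Finset.range (n+3), ∑ j ∈ Finset.range 5, Efun n p1 p2 (w+j) := by
    rw [show Finset.range (n+3) = Finset.Ico 0 (n+3) from Finset.range_eq_Ico _]
    rw [← Finset.sum_Ico_consecutive _ (show (0:ℕ) ≤ n-1 by omega) (show n-1 ≤ n+3 by omega)]
    rw [← Finset.sum_Ico_consecutive _ (show (0:ℕ) ≤ 4 by omega) (show 4 ≤ n-1 by omega)]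
    have c1 := Finset.card_nsmul_le_sum (Finset.Ico 0 4)
      (fun w => ∑ j ∈ Finset.range 5, Efun n p1 p2 (w+j)) 18
      (fun w hw => window_left h1 h2 hd hn w (by have := (Finset.mem_Ico.mp hw).2; omega))
    have c2 := Finset.card_nsmul_le_sum (Finset.Ico 4 (n-1))
      (fun w => ∑ j ∈ Finset.range 5, Efun n p1 p2 (w+j)) 16
      (fun w hw => by
        have := Finset.mem_Ico.mp hw
        exact window_generic h1 h2 hd w this.1 (by omega))
    have c3 := Finset.card_nsmul_le_sum (Finset.Ico (n-1) (n+3))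
      (fun w => ∑ j ∈ Finset.range 5, Efun n p1 p2 (w+j)) 18
      (fun w hw => by
        have := Finset.mem_Ico.mp hw
        exact window_right h1 h2 hd hn w this.1 (by omega))
    rw [Nat.card_Ico, smul_eq_mul] at c1 c2 c3
    omega
  omega

end main


/-- for every `n ≥ 6`, every pair of edge-disjoint Hamiltonian
(1,n)-paths has total cost at least `16(n-1)/5`. -/
theorem stmt_8 (n : ℕ) (hn : 6 ≤ n) (p1 p2 : ℕ → ℕ)
    (h1 : IsHamPath n p1) (h2 : IsHamPath n p2)
    (hd : PathsEdgeDisjoint n p1 p2) :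
    (16 : ℚ) * ((n : ℚ) - 1) / 5 ≤ ((pathCost n p1 + pathCost n p2 : ℕ) : ℚ) := by
  have key := total_bound h1 h2 hd hn
  rw [div_le_iff₀ (by norm_num : (0:ℚ) < 5)]
  have h' : ((16 * (n-1) : ℕ) : ℚ) ≤ ((5 * (pathCost n p1 + pathCost n p2) : ℕ) : ℚ) :=
    Nat.cast_le.mpr key
  push_cast [Nat.cast_sub (show 1 ≤ n by omega)] at h'
  push_cast
  linarith
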